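/- Let T_n denote the n-th Chebyshev polynomial of the first kind, and define ∂_x^{-1}v(x) = ∫_{-1}^{x} v(t) dt and ∂_x^{-2}v(x) = ∂_x^{-1}(∂_x^{-1}v)(x). Then for all real x: (i) ∂_x^{-2}T_0(x) = (x+1)²/2; (ii) ∂_x^{-2}T_1(x) = (x-2)(x+1)²/6; (iii) ∂_x^{-2}T_2(x) = x(x-2)(x+1)²/6; and (iv) for every integer n ≥ 3, ∂_x^{-2}T_n(x) = T_{n+2}(x)/(4(n+1)(n+2)) - T_n(x)/(2(n²-1)) + T_{n-2}(x)/(4(n-1)(n-2)) - (-1)^n(1+x)/(n²-1) - 3(-1)^n/((n²-1)(n²-4)). -/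

import Mathlib

open Polynomial Polynomial.Chebyshev

private lemma intg (f F : ℝ → ℝ) (hF : ∀ t, HasDerivAt F (f t) t) (hf : Continuous f)
    (a b : ℝ) : ∫ t in a..b, f t = F b - F a :=
  intervalIntegral.integral_eq_sub_of_hasDerivAt (fun t _ => hF t) (hf.intervalIntegrable a b)

private lemma Ukey (n : ℤ) : U ℝ n - U ℝ (n - 2) = 2 * T ℝ n := by
  linear_combination (-1 : ℝ[X]) * U_sub_two ℝ n - 2 * T_eq_U_sub_X_mul_U ℝ n

private lemma T_hasDeriv (n : ℤ) (h1 : ((n:ℝ)+1) ≠ 0) (h2 : ((n:ℝ)-1) ≠ 0) (t : ℝ) :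
    HasDerivAt (fun y => (T ℝ (n+1)).eval y / (2*((n:ℝ)+1)) - (T ℝ (n-1)).eval y / (2*((n:ℝ)-1)))
      ((T ℝ n).eval t) t := by
  have hA := ((T ℝ (n+1)).hasDerivAt t).div_const (2*((n:ℝ)+1))
  have hB := ((T ℝ (n-1)).hasDerivAt t).div_const (2*((n:ℝ)-1))
  have h := hA.sub hB
  refine h.congr_deriv (Eq.symm ?_)
  have e := congrArg (eval t) (Ukey n)
  rw [T_derivative_eq_U, T_derivative_eq_U]
  have h3 : n + 1 - 1 = n := by ring
  have h4 : n - 1 - 1 = n - 2 := by ring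
  rw [h3, h4]
  simp only [eval_sub, eval_mul, eval_intCast, eval_ofNat, eval_add, eval_one] at e ⊢
  push_cast
  field_simp
  linear_combination (-1 : ℝ) * e

private lemma T_int (n : ℤ) (h1 : ((n:ℝ)+1) ≠ 0) (h2 : ((n:ℝ)-1) ≠ 0) (a b : ℝ) :
    ∫ t in a..b, (T ℝ n).eval t =
      ((T ℝ (n+1)).eval b / (2*((n:ℝ)+1)) - (T ℝ (n-1)).eval b / (2*((n:ℝ)-1))) -
      ((T ℝ (n+1)).eval a / (2*((n:ℝ)+1)) - (T ℝ (n-1)).eval a / (2*((n:ℝ)-1))) :=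
  intg _ _ (T_hasDeriv n h1 h2) ((T ℝ n).continuous) a b

set_option maxHeartbeats 1000000 in
private lemma T_iint (n : ℤ) (h0 : (n:ℝ) ≠ 0) (h1 : ((n:ℝ)+1) ≠ 0) (h2 : ((n:ℝ)-1) ≠ 0)
    (h3 : ((n:ℝ)+2) ≠ 0) (h4 : ((n:ℝ)-2) ≠ 0) (x : ℝ) :
    (∫ t in (-1:ℝ)..x, ∫ s in (-1:ℝ)..t, (T ℝ n).eval s) =
      (T ℝ (n+2)).eval x / (4*((n:ℝ)+1)*((n:ℝ)+2))
      - (T ℝ n).eval x / (4*(n:ℝ)*((n:ℝ)+1)) - (T ℝ n).eval x / (4*(n:ℝ)*((n:ℝ)-1))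
      + (T ℝ (n-2)).eval x / (4*((n:ℝ)-1)*((n:ℝ)-2))
      - ((T ℝ (n+2)).eval (-1) / (4*((n:ℝ)+1)*((n:ℝ)+2))
        - (T ℝ n).eval (-1) / (4*(n:ℝ)*((n:ℝ)+1)) - (T ℝ n).eval (-1) / (4*(n:ℝ)*((n:ℝ)-1))
        + (T ℝ (n-2)).eval (-1) / (4*((n:ℝ)-1)*((n:ℝ)-2)))
      - ((T ℝ (n+1)).eval (-1) / (2*((n:ℝ)+1)) - (T ℝ (n-1)).eval (-1) / (2*((n:ℝ)-1))) * (x+1) := by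
  have hinner : ∀ t : ℝ, (∫ s in (-1:ℝ)..t, (T ℝ n).eval s) =
      ((T ℝ (n+1)).eval t / (2*((n:ℝ)+1)) - (T ℝ (n-1)).eval t / (2*((n:ℝ)-1))) -
      ((T ℝ (n+1)).eval (-1) / (2*((n:ℝ)+1)) - (T ℝ (n-1)).eval (-1) / (2*((n:ℝ)-1))) :=
    fun t => T_int n h1 h2 (-1) t
  simp only [hinner]
  set c : ℝ := (T ℝ (n+1)).eval (-1) / (2*((n:ℝ)+1)) - (T ℝ (n-1)).eval (-1) / (2*((n:ℝ)-1)) with hc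
  have h1' : (((n:ℤ)+1 : ℤ):ℝ) + 1 ≠ 0 := by push_cast; intro h; apply h3; linarith
  have h1'' : (((n:ℤ)+1 : ℤ):ℝ) - 1 ≠ 0 := by push_cast; intro h; apply h0; linarith
  have h2' : (((n:ℤ)-1 : ℤ):ℝ) + 1 ≠ 0 := by push_cast; intro h; apply h0; linarith
  have h2'' : (((n:ℤ)-1 : ℤ):ℝ) - 1 ≠ 0 := by push_cast; intro h; apply h4; linarith
  set G : ℝ → ℝ := fun y =>
      (T ℝ (n+2)).eval y / (4*((n:ℝ)+1)*((n:ℝ)+2))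
      - (T ℝ n).eval y / (4*(n:ℝ)*((n:ℝ)+1)) - (T ℝ n).eval y / (4*(n:ℝ)*((n:ℝ)-1))
      + (T ℝ (n-2)).eval y / (4*((n:ℝ)-1)*((n:ℝ)-2)) - c * y with hGdef
  have hG : ∀ t : ℝ, HasDerivAt G
      (((T ℝ (n+1)).eval t / (2*((n:ℝ)+1)) - (T ℝ (n-1)).eval t / (2*((n:ℝ)-1))) - c) t := by
    intro t
    have d1 := (T_hasDeriv (n+1) h1' h1'' t).div_const (2*((n:ℝ)+1))
    have d2 := (T_hasDeriv (n-1) h2' h2'' t).div_const (2*((n:ℝ)-1))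
    have d3 : HasDerivAt (fun y : ℝ => c * y) c t := by
      simpa using (hasDerivAt_id t).const_mul c
    have h := (d1.sub d2).sub d3
    have hfun : (fun y : ℝ =>
        ((T ℝ (n+1+1)).eval y / (2*((((n:ℤ)+1 : ℤ):ℝ)+1)) -
          (T ℝ (n+1-1)).eval y / (2*((((n:ℤ)+1 : ℤ):ℝ)-1))) / (2*((n:ℝ)+1))
        - ((T ℝ (n-1+1)).eval y / (2*((((n:ℤ)-1 : ℤ):ℝ)+1)) -
          (T ℝ (n-1-1)).eval y / (2*((((n:ℤ)-1 : ℤ):ℝ)-1))) / (2*((n:ℝ)-1))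
        - c * y) = G := by
      funext y
      simp only [hGdef, show (n+1+1 : ℤ) = n+2 from by ring, show (n+1-1 : ℤ) = n from by ring,
        show (n-1+1 : ℤ) = n from by ring, show (n-1-1 : ℤ) = n-2 from by ring]
      push_cast
      rw [sub_div, sub_div, div_div, div_div, div_div, div_div,
        show (2*((n:ℝ)+1+1))*(2*((n:ℝ)+1)) = 4*((n:ℝ)+1)*((n:ℝ)+2) by ring,
        show (2*((n:ℝ)+1-1))*(2*((n:ℝ)+1)) = 4*(n:ℝ)*((n:ℝ)+1) by ring,
        show (2*((n:ℝ)-1+1))*(2*((n:ℝ)-1)) = 4*(n:ℝ)*((n:ℝ)-1) by ring,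
        show (2*((n:ℝ)-1-1))*(2*((n:ℝ)-1)) = 4*((n:ℝ)-1)*((n:ℝ)-2) by ring]
      ring
    rw [← hfun]
    exact h
  have hcont : Continuous (fun t : ℝ =>
      ((T ℝ (n+1)).eval t / (2*((n:ℝ)+1)) - (T ℝ (n-1)).eval t / (2*((n:ℝ)-1))) - c) :=
    (((T ℝ (n+1)).continuous.div_const _).sub ((T ℝ (n-1)).continuous.div_const _)).sub
      continuous_const
  rw [intg _ _ hG hcont, hGdef]
  ring

private lemma Tm1 : ∀ k : ℕ, (T ℝ (k : ℤ)).eval (-1) = (-1 : ℝ) ^ k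
  | 0 => by simp [T_zero]
  | 1 => by simp [T_one]
  | (k+2) => by
      have h := congrArg (eval (-1 : ℝ)) (T_add_two ℝ k)
      have e1 := Tm1 k
      have e2 := Tm1 (k+1)
      push_cast at h e1 e2 ⊢
      simp only [eval_sub, eval_mul, eval_ofNat, eval_X] at h
      rw [h, e1, e2]
      ring


set_option maxHeartbeats 1000000 in
/-- formulas for the twice-iterated integral
`∂_x^{-2} T_n(x) = ∫_{-1}^x ∫_{-1}^t T_n(s) ds dt`. -/
theorem stmt_13 (x : ℝ) :
    (∫ t in (-1 : ℝ)..x, ∫ s in (-1 : ℝ)..t, (Polynomial.Chebyshev.T ℝ 0).eval s) =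
        (x + 1) ^ 2 / 2 ∧
    (∫ t in (-1 : ℝ)..x, ∫ s in (-1 : ℝ)..t, (Polynomial.Chebyshev.T ℝ 1).eval s) =
        (x - 2) * (x + 1) ^ 2 / 6 ∧
    (∫ t in (-1 : ℝ)..x, ∫ s in (-1 : ℝ)..t, (Polynomial.Chebyshev.T ℝ 2).eval s) =
        x * (x - 2) * (x + 1) ^ 2 / 6 ∧
    ∀ n : ℕ, 3 ≤ n →
      (∫ t in (-1 : ℝ)..x, ∫ s in (-1 : ℝ)..t, (Polynomial.Chebyshev.T ℝ n).eval s) =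
        (Polynomial.Chebyshev.T ℝ ((n : ℤ) + 2)).eval x /
            (4 * ((n : ℝ) + 1) * ((n : ℝ) + 2)) -
          (Polynomial.Chebyshev.T ℝ n).eval x / (2 * ((n : ℝ) ^ 2 - 1)) +
          (Polynomial.Chebyshev.T ℝ ((n : ℤ) - 2)).eval x /
            (4 * ((n : ℝ) - 1) * ((n : ℝ) - 2)) -
          (-1 : ℝ) ^ n * (1 + x) / ((n : ℝ) ^ 2 - 1) -
          3 * (-1 : ℝ) ^ n / (((n : ℝ) ^ 2 - 1) * ((n : ℝ) ^ 2 - 4)) := by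

  refine ⟨?_, ?_, ?_, ?_⟩
  · have h0 : ∀ t : ℝ, (∫ s in (-1:ℝ)..t, (T ℝ 0).eval s) = t + 1 := by
      intro t; simp [T_zero]
    simp only [h0]
    have hF : ∀ t : ℝ, HasDerivAt (fun y : ℝ => (y+1)^2/2) (t + 1) t := by
      intro t
      have := (((hasDerivAt_id t).add_const 1).pow 2).div_const 2
      refine this.congr_deriv (Eq.symm ?_)
      norm_num
    rw [intg _ _ hF (by continuity) (-1) x]
    norm_num
  · have h1 : ∀ t : ℝ, (∫ s in (-1:ℝ)..t, (T ℝ 1).eval s) = (t^2-1)/2 := by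
      intro t; simp [T_one]
    simp only [h1]
    have hF : ∀ t : ℝ, HasDerivAt (fun y : ℝ => (y-2)*(y+1)^2/6) ((t^2-1)/2) t := by
      intro t
      have := (((hasDerivAt_id t).sub_const 2).mul
        (((hasDerivAt_id t).add_const 1).pow 2)).div_const 6
      refine this.congr_deriv (Eq.symm ?_)
      norm_num
      ring
    rw [intg _ _ hF (by continuity) (-1) x]
    norm_num
  · have h2 : ∀ t : ℝ, (∫ s in (-1:ℝ)..t, (T ℝ 2).eval s) = 2*t^3/3 - t - 1/3 := by
      intro t
      have hF : ∀ s : ℝ, HasDerivAt (fun y : ℝ => 2*y^3/3 - y) ((T ℝ 2).eval s) s := by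
        intro s
        have := (((hasDerivAt_pow 3 s).const_mul 2).div_const 3).sub (hasDerivAt_id s)
        refine this.congr_deriv (Eq.symm ?_)
        simp [T_two]
        ring
      rw [intg _ _ hF ((T ℝ 2).continuous) (-1) t]
      norm_num
    simp only [h2]
    have hF : ∀ t : ℝ, HasDerivAt (fun y : ℝ => y^4/6 - y^2/2 - y/3)
        (2*t^3/3 - t - 1/3) t := by
      intro t
      have := (((hasDerivAt_pow 4 t).div_const 6).sub ((hasDerivAt_pow 2 t).div_const 2)).sub
        ((hasDerivAt_id t).div_const 3)
      refine this.congr_deriv (Eq.symm ?_)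
      norm_num
      ring
    rw [intg _ _ hF (by continuity) (-1) x]
    norm_num
    ring
  · intro n hn
    obtain ⟨m, rfl⟩ : ∃ m : ℕ, n = m + 3 := ⟨n - 3, by omega⟩
    have hm : (0:ℝ) ≤ (m:ℝ) := Nat.cast_nonneg m
    have key := T_iint ((m:ℤ)+3)
      (by push_cast; intro h; linarith)
      (by push_cast; intro h; linarith)
      (by push_cast; intro h; linarith)
      (by push_cast; intro h; linarith)
      (by push_cast; intro h; linarith) x
    push_cast at key ⊢
    simp only [show ((m:ℤ)+3+2) = ((m:ℤ)+5) from by ring,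
      show ((m:ℤ)+3-2) = ((m:ℤ)+1) from by ring,
      show ((m:ℤ)+3+1) = ((m:ℤ)+4) from by ring,
      show ((m:ℤ)+3-1) = ((m:ℤ)+2) from by ring] at key ⊢
    have T5 := Tm1 (m+5); have T4 := Tm1 (m+4); have T3 := Tm1 (m+3)
    have T2 := Tm1 (m+2); have T1 := Tm1 (m+1)
    push_cast at T5 T4 T3 T2 T1
    rw [T5, T4, T3, T2, T1] at key
    rw [key]
    simp only [show ((m:ℝ)+3+1) = ((m:ℝ)+4) from by ring,
      show ((m:ℝ)+3+2) = ((m:ℝ)+5) from by ring,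
      show ((m:ℝ)+3-1) = ((m:ℝ)+2) from by ring,
      show ((m:ℝ)+3-2) = ((m:ℝ)+1) from by ring,
      show ((m:ℝ)+3)^2-1 = ((m:ℝ)+2)*((m:ℝ)+4) from by ring,
      show ((m:ℝ)+3)^2-4 = ((m:ℝ)+1)*((m:ℝ)+5) from by ring]
    have q1 : ((m:ℝ)+1) ≠ 0 := by intro h; linarith
    have q2 : ((m:ℝ)+2) ≠ 0 := by intro h; linarith
    have q3 : ((m:ℝ)+3) ≠ 0 := by intro h; linarith
    have q4 : ((m:ℝ)+4) ≠ 0 := by intro h; linarith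
    have q5 : ((m:ℝ)+5) ≠ 0 := by intro h; linarith
    field_simp
    ring
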